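/- arXiv:1702.04737 — 2 statements merged into one kernel-verified Lean document; each statement's English description precedes it below -/
import Mathlib

section
/- Let V be a real symmetric 2n×2n matrix with V + iΩ ≻ 0 and let M be a principal square-root matrix for V. Then M V = V Mᵀ; equivalently, the matrix (M + I)V is symmetric. (This is the symmetry of the covariance matrix V_{√σ} = (√(I + (VΩ)^{-2}) + I)V of the square root of a Gaussian state.) -/
noncomputable section
open Matrix
open scoped ComplexOrder

/-- The standard `2n × 2n` symplectic form matrix `Ω = [[0, I], [-I, 0]]`. -/
def Om (n : ℕ) : Matrix (Fin n ⊕ Fin n) (Fin n ⊕ Fin n) ℝ :=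
  Matrix.fromBlocks 0 1 (-1) 0

/-- Complexification of a real matrix. -/
def cm {k l : Type*} (A : Matrix k l ℝ) : Matrix k l ℂ := A.map Complex.ofReal

section Aux

variable {m : Type*} [Fintype m] [DecidableEq m]

lemma cm_eq_mapMatrix (A : Matrix m m ℝ) :
    cm A = (Complex.ofRealHom.mapMatrix : Matrix m m ℝ →+* Matrix m m ℂ) A := rfl

lemma cm_mul (A B : Matrix m m ℝ) : cm (A * B) = cm A * cm B := by
  simp [cm_eq_mapMatrix]

lemma cm_sub (A B : Matrix m m ℝ) : cm (A - B) = cm A - cm B := by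
  ext i j; simp [cm]

lemma cm_transpose (A : Matrix m m ℝ) : cm Aᵀ = (cm A)ᵀ := by
  ext i j; simp [cm]

lemma cm_eq_zero {A : Matrix m m ℝ} (h : cm A = 0) : A = 0 := by
  ext i j
  have := congrFun (congrFun h i) j
  simpa [cm] using this

lemma cm_det (A : Matrix m m ℝ) : (cm A).det = Complex.ofReal A.det :=
  (RingHom.map_det Complex.ofRealHom A).symm

/-- semiconjugation extends to polynomials -/
lemma aeval_semiconj {A B X : Matrix m m ℂ} (h : A * X = X * B) (p : Polynomial ℂ) :
    (Polynomial.aeval A p) * X = X * (Polynomial.aeval B p) := by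
  induction p using Polynomial.induction_on' with
  | add p q hp hq => simp [map_add, add_mul, mul_add, hp, hq]
  | monomial k a =>
      have hk : A ^ k * X = X * B ^ k := by
        induction k with
        | zero => simp
        | succ k ih =>
            rw [pow_succ, pow_succ, Matrix.mul_assoc, h, ← Matrix.mul_assoc, ih,
              Matrix.mul_assoc]
      rw [Polynomial.aeval_monomial, Polynomial.aeval_monomial, Matrix.mul_assoc, hk,
        ← Matrix.mul_assoc, Algebra.commutes, Matrix.mul_assoc]

lemma charpoly_eval (A : Matrix m m ℂ) (t : ℂ) :
    A.charpoly.eval t = (t • (1 : Matrix m m ℂ) - A).det := by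
  rw [Matrix.charpoly, ← Polynomial.coe_evalRingHom, RingHom.map_det]
  congr 1
  ext i j
  by_cases h : i = j
  · subst h
    simp [Matrix.charmatrix_apply_eq, Matrix.one_apply]
  · simp [Matrix.charmatrix_apply_ne _ _ _ h, Matrix.one_apply_ne h]

end Aux

/-- If `V` is real symmetric with `V + iΩ ≻ 0` and `M` is a principal square-root matrix for `V`
(`M` real, `M² = I + (VΩ)⁻²`, `M` commutes with `VΩ`, all complex eigenvalues of `M` positive
real), then `M V = V Mᵀ`; equivalently, `(M + I) V` is symmetric. -/
theorem principal_sqrt_symm (n : ℕ)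
    (V M : Matrix (Fin n ⊕ Fin n) (Fin n ⊕ Fin n) ℝ)
    (hV : V.IsSymm)
    (hVpd : (cm V + Complex.I • cm (Om n)).PosDef)
    (hM2 : M * M = 1 + ((V * Om n)⁻¹) ^ 2)
    (hMcomm : M * (V * Om n) = (V * Om n) * M)
    (hMeig : ∀ μ : ℂ, (cm M).charpoly.IsRoot μ → μ.im = 0 ∧ 0 < μ.re) :
    M * V = V * Mᵀ ∧ ((M + 1) * V).IsSymm := by
  -- basic facts about Ω
  have hOmT : (Om n)ᵀ = -Om n := by
    rw [Om, Matrix.fromBlocks_transpose, Matrix.fromBlocks_neg]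
    norm_num
  have hOm2 : Om n * Om n = -1 := by
    rw [Om, Matrix.fromBlocks_multiply, ← Matrix.fromBlocks_one, Matrix.fromBlocks_neg]
    norm_num
  have hOminv : (Om n)⁻¹ = -Om n := Matrix.inv_eq_right_inv (by rw [mul_neg, hOm2, neg_neg])
  have hOminv' : (-Om n)⁻¹ = Om n := Matrix.inv_eq_right_inv (by rw [neg_mul, hOm2, neg_neg])
  -- V is invertible
  have hdetV : IsUnit V.det := by
    have hT : ((cm V + Complex.I • cm (Om n))ᵀ).PosDef := hVpd.transpose
    have hTe : (cm V + Complex.I • cm (Om n))ᵀ = cm V - Complex.I • cm (Om n) := by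
      rw [Matrix.transpose_add, Matrix.transpose_smul, ← cm_transpose, ← cm_transpose, hV.eq,
        hOmT, show cm (-Om n) = -cm (Om n) from by ext i j; simp [cm], smul_neg,
        sub_eq_add_neg]
    rw [hTe] at hT
    have hsumeq : (cm V + Complex.I • cm (Om n)) + (cm V - Complex.I • cm (Om n))
        = cm V + cm V := by abel
    have hsum : (cm V + cm V).PosDef := by
      constructor
      · rw [← hsumeq]; exact hVpd.1.add hT.1
      · exact (hsumeq ▸ hVpd.add hT).2
    have hdet := hsum.det_pos
    have hc : cm V + cm V = cm (V + V) := by ext i j; simp [cm]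
    rw [hc, cm_det] at hdet
    have hne : (V + V).det ≠ 0 := by
      intro h0
      rw [h0] at hdet
      simp at hdet
    have h2V : V + V = (2 : ℝ) • V := by ext i j; simp [two_mul]
    rw [h2V, Matrix.det_smul] at hne
    have hVd : V.det ≠ 0 := by
      intro h
      exact hne (by rw [h, mul_zero])
    exact isUnit_iff_ne_zero.mpr hVd
  have hVV : V * V⁻¹ = 1 := Matrix.mul_nonsing_inv V hdetV
  have hVV' : V⁻¹ * V = 1 := Matrix.nonsing_inv_mul V hdetV
  -- the key algebraic identity M² V = V (Mᵀ)²
  have hA : (V * Om n)⁻¹ = -Om n * V⁻¹ := by rw [Matrix.mul_inv_rev, hOminv]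
  have hAT : ((V * Om n)ᵀ)⁻¹ = V⁻¹ * Om n := by
    rw [Matrix.transpose_mul, hOmT, hV.eq, Matrix.mul_inv_rev, hOminv']
  have hMsqT : Mᵀ * Mᵀ = 1 + V⁻¹ * Om n * (V⁻¹ * Om n) := by
    have h := congrArg Matrix.transpose hM2
    rw [Matrix.transpose_mul, Matrix.transpose_add, Matrix.transpose_one, Matrix.transpose_pow,
      Matrix.transpose_nonsing_inv, hAT, pow_two] at h
    exact h
  have hKey : M * M * V = V * (Mᵀ * Mᵀ) := by
    rw [hM2, hA, hMsqT, pow_two, add_mul, mul_add, one_mul, mul_one]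
    congr 1
    simp only [Matrix.mul_assoc, Matrix.neg_mul, Matrix.mul_neg, neg_neg]
    rw [hVV', ← Matrix.mul_assoc V V⁻¹, hVV, Matrix.one_mul, Matrix.mul_one]
  -- Sylvester relation for X := M V - V Mᵀ
  have hSyl : M * (M * V - V * Mᵀ) = (M * V - V * Mᵀ) * (-Mᵀ) := by
    rw [mul_sub, sub_mul, mul_neg, mul_neg, ← Matrix.mul_assoc, ← Matrix.mul_assoc, hKey]
    rw [Matrix.mul_assoc, Matrix.mul_assoc]
    abel
  -- complexify
  set M' : Matrix (Fin n ⊕ Fin n) (Fin n ⊕ Fin n) ℂ := cm M with hM'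
  set X' : Matrix (Fin n ⊕ Fin n) (Fin n ⊕ Fin n) ℂ := cm (M * V - V * Mᵀ) with hX'
  have hSyl' : M' * X' = X' * (-M'ᵀ) := by
    have := congrArg cm hSyl
    rw [cm_mul, cm_mul] at this
    rw [hX', hM', this]
    congr 1
    rw [← cm_transpose]
    ext i j
    simp [cm]
  set p : Polynomial ℂ := M'.charpoly with hp
  have hXp : X' * (Polynomial.aeval (-M'ᵀ) p) = 0 := by
    have h := aeval_semiconj hSyl' p
    rw [hp, Matrix.aeval_self_charpoly, Matrix.zero_mul] at h
    exact h.symm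
  -- the polynomial evaluated at -M'ᵀ is invertible
  have hUnit : IsUnit (Polynomial.aeval (-M'ᵀ) p) := by
    have hmonic : p.Monic := Matrix.charpoly_monic M'
    have hsplit : p = (p.roots.map fun a => Polynomial.X - Polynomial.C a).prod :=
      (IsAlgClosed.splits p).eq_prod_roots_of_monic hmonic
    have hlist : p = ((p.roots.toList.map fun a => Polynomial.X - Polynomial.C a)).prod := by
      conv_lhs => rw [hsplit, ← Multiset.coe_toList p.roots, Multiset.map_coe,
        Multiset.prod_coe]
    rw [hlist, map_list_prod, List.map_map]
    apply List.prod_isUnit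
    intro Y hY
    rw [List.mem_map] at hY
    obtain ⟨a, haroots, rfl⟩ := hY
    have haroot : p.IsRoot a :=
      (Polynomial.mem_roots hmonic.ne_zero).mp (Multiset.mem_toList.mp haroots)
    obtain ⟨him, hre⟩ := hMeig a haroot
    have ht : ((-a) • (1 : Matrix (Fin n ⊕ Fin n) (Fin n ⊕ Fin n) ℂ) - M')ᵀ
        = (-a) • (1 : Matrix (Fin n ⊕ Fin n) (Fin n ⊕ Fin n) ℂ) - M'ᵀ := by
      rw [Matrix.transpose_sub, Matrix.transpose_smul, Matrix.transpose_one]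
    have heval : (Polynomial.aeval (-M'ᵀ) ∘ fun a => Polynomial.X - Polynomial.C a) a
        = (-a) • (1 : Matrix (Fin n ⊕ Fin n) (Fin n ⊕ Fin n) ℂ) - M'ᵀ := by
      simp only [Function.comp_apply, map_sub, Polynomial.aeval_X, Polynomial.aeval_C,
        Algebra.algebraMap_eq_smul_one, neg_smul]
      abel
    rw [heval, ← ht, Matrix.isUnit_iff_isUnit_det, Matrix.det_transpose, ← charpoly_eval,
      isUnit_iff_ne_zero]
    intro h0
    have hroot : p.IsRoot (-a) := h0
    obtain ⟨_, hre2⟩ := hMeig (-a) hroot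
    rw [Complex.neg_re] at hre2
    linarith
  have hX0 : X' = 0 := by
    have hud : IsUnit (Polynomial.aeval (-M'ᵀ) p).det :=
      (Matrix.isUnit_iff_isUnit_det _).mp hUnit
    have := congrArg (fun Y => Y * (Polynomial.aeval (-M'ᵀ) p)⁻¹) hXp
    simpa [Matrix.mul_assoc, Matrix.mul_nonsing_inv _ hud] using this
  have hMV : M * V = V * Mᵀ := by
    have h2 : M * V - V * Mᵀ = 0 := cm_eq_zero hX0
    exact sub_eq_zero.mp h2
  exact ⟨hMV, by
    rw [Matrix.IsSymm, Matrix.transpose_mul, Matrix.transpose_add, Matrix.transpose_one, hV.eq,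
      mul_add, mul_one, ← hMV, add_mul, one_mul]⟩
end
end

section
/- Let X be an invertible real 2n×2n matrix such that ΩX is symmetric, let s ∈ ℝ^{2n} and a ∈ ℝ. Then the matrix exponential of the (2n+2)×(2n+2) block matrix T = [[0, sᵀΩᵀ, a], [0, X, s], [0, 0, 0]] (blocks of sizes 1, 2n, 1) is exp(T) = [[1, ((I − exp(−X))X^{-1} s)ᵀ Ωᵀ, a + sᵀ Ω (X − sinh X) X^{-2} s], [0, exp(X), (exp(X) − I)X^{-1} s], [0, 0, 1]], where sinh X := (exp(X) − exp(−X))/2. -/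
noncomputable section
open Matrix

/-- The `(2n+2) × (2n+2)` block matrix `[[0, sᵀΩᵀ, a], [0, X, s], [0, 0, 0]]`
(blocks of sizes `1`, `2n`, `1`) associated to an inhomogeneous quadratic Hamiltonian. -/
def blk {n : ℕ} (X : Matrix (Fin n ⊕ Fin n) (Fin n ⊕ Fin n) ℝ)
    (s : Fin n ⊕ Fin n → ℝ) (a : ℝ) :
    Matrix (Unit ⊕ ((Fin n ⊕ Fin n) ⊕ Unit)) (Unit ⊕ ((Fin n ⊕ Fin n) ⊕ Unit)) ℝ :=
  Matrix.of fun i j =>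
    match i, j with
    | Sum.inl _, Sum.inr (Sum.inl k) => (Om n *ᵥ s) k  -- row vector sᵀΩᵀ
    | Sum.inl _, Sum.inr (Sum.inr _) => a
    | Sum.inr (Sum.inl k), Sum.inr (Sum.inl l) => X k l
    | Sum.inr (Sum.inl k), Sum.inr (Sum.inr _) => s k
    | _, _ => 0

/-- The `(2n+2) × (2n+2)` unipotent block matrix `[[1, tᵀΩᵀ, b], [0, Y, u], [0, 0, 1]]`
(blocks of sizes `1`, `2n`, `1`). -/
def blkU {n : ℕ} (Y : Matrix (Fin n ⊕ Fin n) (Fin n ⊕ Fin n) ℝ)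
    (t u : Fin n ⊕ Fin n → ℝ) (b : ℝ) :
    Matrix (Unit ⊕ ((Fin n ⊕ Fin n) ⊕ Unit)) (Unit ⊕ ((Fin n ⊕ Fin n) ⊕ Unit)) ℝ :=
  Matrix.of fun i j =>
    match i, j with
    | Sum.inl _, Sum.inl _ => 1
    | Sum.inl _, Sum.inr (Sum.inl k) => (Om n *ᵥ t) k  -- row vector tᵀΩᵀ
    | Sum.inl _, Sum.inr (Sum.inr _) => b
    | Sum.inr (Sum.inl k), Sum.inr (Sum.inl l) => Y k l
    | Sum.inr (Sum.inl k), Sum.inr (Sum.inr _) => u k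
    | Sum.inr (Sum.inr _), Sum.inr (Sum.inr _) => 1
    | _, _ => 0


open NormedSpace

section Helpers

variable {m : Type*} [Fintype m] [DecidableEq m]

private lemma summable_exp_series (A : Matrix m m ℝ) :
    Summable fun k : ℕ => ((Nat.factorial k : ℝ))⁻¹ • A ^ k := by
  letI : SeminormedRing (Matrix m m ℝ) := Matrix.linftyOpSemiNormedRing
  letI : NormedRing (Matrix m m ℝ) := Matrix.linftyOpNormedRing
  letI : NormedAlgebra ℝ (Matrix m m ℝ) := Matrix.linftyOpNormedAlgebra
  exact NormedSpace.expSeries_summable' (𝕂 := ℝ) A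

private lemma summable_aux (A : Matrix m m ℝ) (c : ℕ → ℝ)
    (hc : ∀ k, |c k| ≤ ((Nat.factorial k : ℝ))⁻¹) :
    Summable fun k : ℕ => c k • A ^ k := by
  letI : SeminormedRing (Matrix m m ℝ) := Matrix.linftyOpSemiNormedRing
  letI : NormedRing (Matrix m m ℝ) := Matrix.linftyOpNormedRing
  letI : NormedAlgebra ℝ (Matrix m m ℝ) := Matrix.linftyOpNormedAlgebra
  refine Summable.of_norm_bounded (NormedSpace.norm_expSeries_summable' (𝕂 := ℝ) A) ?_
  intro k
  rw [norm_smul, norm_smul]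
  apply mul_le_mul_of_nonneg_right _ (norm_nonneg _)
  rw [Real.norm_eq_abs, Real.norm_eq_abs,
    abs_of_nonneg (a := ((Nat.factorial k : ℝ))⁻¹) (by positivity)]
  exact hc k

private lemma exp_peel1 (A : Matrix m m ℝ) :
    exp A = 1 + ∑' k : ℕ, ((Nat.factorial (k+1) : ℝ))⁻¹ • A ^ (k+1) := by
  letI : SeminormedRing (Matrix m m ℝ) := Matrix.linftyOpSemiNormedRing
  letI : NormedRing (Matrix m m ℝ) := Matrix.linftyOpNormedRing
  letI : NormedAlgebra ℝ (Matrix m m ℝ) := Matrix.linftyOpNormedAlgebra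
  rw [NormedSpace.exp_eq_tsum (𝕂 := ℝ)]
  dsimp only
  erw [(NormedSpace.expSeries_summable' (𝕂 := ℝ) A).tsum_eq_zero_add]
  simp
  rfl

private lemma exp_peel2 (A : Matrix m m ℝ) :
    exp A = 1 + A + ∑' k : ℕ, ((Nat.factorial (k+2) : ℝ))⁻¹ • A ^ (k+2) := by
  letI : SeminormedRing (Matrix m m ℝ) := Matrix.linftyOpSemiNormedRing
  letI : NormedRing (Matrix m m ℝ) := Matrix.linftyOpNormedRing
  letI : NormedAlgebra ℝ (Matrix m m ℝ) := Matrix.linftyOpNormedAlgebra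
  rw [exp_peel1]
  have h : Summable fun k : ℕ => ((Nat.factorial (k+1) : ℝ))⁻¹ • A ^ (k+1) := by
    have := (summable_nat_add_iff 1).mpr (NormedSpace.expSeries_summable' (𝕂 := ℝ) A)
    exact this
  rw [h.tsum_eq_zero_add]
  simp [add_assoc]

private lemma fact_bound1 (k : ℕ) :
    |((Nat.factorial (k+1) : ℝ))⁻¹| ≤ ((Nat.factorial k : ℝ))⁻¹ := by
  rw [abs_of_nonneg (by positivity)]
  apply inv_anti₀ (by positivity)
  exact_mod_cast Nat.factorial_le (Nat.le_succ k)

private lemma fact_bound2 (k : ℕ) :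
    |((Nat.factorial (k+2) : ℝ))⁻¹| ≤ ((Nat.factorial k : ℝ))⁻¹ := by
  rw [abs_of_nonneg (by positivity)]
  apply inv_anti₀ (by positivity)
  exact_mod_cast Nat.factorial_le (by omega)

private lemma summable1 (A : Matrix m m ℝ) :
    Summable fun k : ℕ => ((Nat.factorial (k+1) : ℝ))⁻¹ • A ^ k :=
  summable_aux A _ fact_bound1

private lemma summable2 (A : Matrix m m ℝ) :
    Summable fun k : ℕ => ((Nat.factorial (k+2) : ℝ))⁻¹ • A ^ k :=
  summable_aux A _ fact_bound2

private lemma commute_inv {A B : Matrix m m ℝ} (hA : IsUnit A.det) (h : Commute A B) :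
    Commute A⁻¹ B := by
  show A⁻¹ * B = B * A⁻¹
  calc A⁻¹ * B = A⁻¹ * B * (A * A⁻¹) := by rw [Matrix.mul_nonsing_inv _ hA, mul_one]
  _ = A⁻¹ * (B * A) * A⁻¹ := by noncomm_ring
  _ = A⁻¹ * (A * B) * A⁻¹ := by rw [h.eq]
  _ = B * A⁻¹ := by rw [← mul_assoc, mul_assoc A⁻¹, ← mul_assoc A⁻¹,
        Matrix.nonsing_inv_mul _ hA, one_mul]

private lemma commute_X_expX (A : Matrix m m ℝ) : Commute A (exp A) := by
  letI : SeminormedRing (Matrix m m ℝ) := Matrix.linftyOpSemiNormedRing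
  letI : NormedRing (Matrix m m ℝ) := Matrix.linftyOpNormedRing
  letI : NormedAlgebra ℝ (Matrix m m ℝ) := Matrix.linftyOpNormedAlgebra
  exact (Commute.refl A).exp_right

private lemma commute_X_expnX (A : Matrix m m ℝ) : Commute A (exp (-A)) := by
  letI : SeminormedRing (Matrix m m ℝ) := Matrix.linftyOpSemiNormedRing
  letI : NormedRing (Matrix m m ℝ) := Matrix.linftyOpNormedRing
  letI : NormedAlgebra ℝ (Matrix m m ℝ) := Matrix.linftyOpNormedAlgebra
  exact ((Commute.refl A).neg_right).exp_right

private lemma F_eq (X : Matrix m m ℝ) (hX : IsUnit X.det) :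
    ∑' k : ℕ, ((Nat.factorial (k+1) : ℝ))⁻¹ • X ^ k = (exp X - 1) * X⁻¹ := by
  have hs := summable1 X
  have key : X * (∑' k : ℕ, ((Nat.factorial (k+1) : ℝ))⁻¹ • X ^ k) = exp X - 1 := by
    rw [← hs.tsum_mul_left X]
    have hc : ∀ k : ℕ, X * (((Nat.factorial (k+1) : ℝ))⁻¹ • X ^ k)
        = ((Nat.factorial (k+1) : ℝ))⁻¹ • X ^ (k+1) := by
      intro k; rw [mul_smul_comm, pow_succ']
    rw [tsum_congr hc]
    rw [exp_peel1 X]; abel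
  have h2 : (∑' k : ℕ, ((Nat.factorial (k+1) : ℝ))⁻¹ • X ^ k) = X⁻¹ * (exp X - 1) := by
    rw [← key, ← mul_assoc, Matrix.nonsing_inv_mul _ hX, one_mul]
  rw [h2]
  exact (commute_inv hX (((commute_X_expX X).sub_right (Commute.one_right X)))).eq

private lemma G_eq (X : Matrix m m ℝ) (hX : IsUnit X.det) :
    ∑' k : ℕ, ((Nat.factorial (k+2) : ℝ))⁻¹ • X ^ k
      = (exp X - 1 - X) * (X⁻¹ * X⁻¹) := by
  have hs := summable2 X
  have hc1 : ∀ k : ℕ, X * (((Nat.factorial (k+2) : ℝ))⁻¹ • X ^ k)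
      = ((Nat.factorial (k+2) : ℝ))⁻¹ • X ^ (k+1) := by
    intro k; rw [mul_smul_comm, pow_succ']
  have hs' : Summable fun k : ℕ => ((Nat.factorial (k+2) : ℝ))⁻¹ • X ^ (k+1) := by
    simpa only [hc1] using hs.mul_left X
  have key : X * (X * (∑' k : ℕ, ((Nat.factorial (k+2) : ℝ))⁻¹ • X ^ k))
      = exp X - 1 - X := by
    rw [← hs.tsum_mul_left X, tsum_congr hc1, ← hs'.tsum_mul_left X]
    have hc2 : ∀ k : ℕ, X * (((Nat.factorial (k+2) : ℝ))⁻¹ • X ^ (k+1))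
        = ((Nat.factorial (k+2) : ℝ))⁻¹ • X ^ (k+2) := by
      intro k; simp [mul_smul_comm, pow_succ']
    rw [tsum_congr hc2, exp_peel2 X]; abel
  have h2 : (∑' k : ℕ, ((Nat.factorial (k+2) : ℝ))⁻¹ • X ^ k)
      = X⁻¹ * (X⁻¹ * (exp X - 1 - X)) := by
    have hXi : ∀ Z : Matrix m m ℝ, X⁻¹ * (X * Z) = Z := fun Z => by
      rw [← mul_assoc, Matrix.nonsing_inv_mul _ hX, one_mul]
    rw [← key, hXi, hXi]
  have hcom : Commute X⁻¹ (exp X - 1 - X) :=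
    commute_inv hX (((commute_X_expX X).sub_right (Commute.one_right X)).sub_right
      (Commute.refl X))
  rw [h2, hcom.eq, ← mul_assoc, hcom.eq, mul_assoc]

private lemma R_eq (X : Matrix m m ℝ) :
    ∑' k : ℕ, ((Nat.factorial (k+2) : ℝ))⁻¹ • X ^ (k+1)
      = (∑' k : ℕ, ((Nat.factorial (k+1) : ℝ))⁻¹ • X ^ k) - 1 := by
  rw [(summable1 X).tsum_eq_zero_add]
  simp

end Helpers

section SumHelpers

variable {ι α β : Type*} [Fintype α] [Fintype β]

private lemma hasSum_entry {f : ι → Matrix α β ℝ} {M : Matrix α β ℝ} (h : HasSum f M)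
    (i : α) (j : β) : HasSum (fun x => f x i j) (M i j) :=
  Pi.hasSum.mp (Pi.hasSum.mp h i) j

private lemma tsum_entry {f : ι → Matrix α β ℝ} (hf : Summable f) (i : α) (j : β) :
    (∑' x, f x) i j = ∑' x, f x i j :=
  (hasSum_entry hf.hasSum i j).tsum_eq.symm

private lemma vecMul_smul_matrix (v : α → ℝ) (c : ℝ) (A : Matrix α β ℝ) :
    v ᵥ* (c • A) = c • (v ᵥ* A) := by
  ext j
  simp only [Matrix.vecMul, dotProduct, Matrix.smul_apply, smul_eq_mul, Pi.smul_apply,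
    Finset.mul_sum]
  exact Finset.sum_congr rfl fun i _ => by ring

private lemma hasSum_vecMul {f : ι → Matrix α β ℝ} {M : Matrix α β ℝ} (h : HasSum f M)
    (v : α → ℝ) : HasSum (fun k => v ᵥ* f k) (v ᵥ* M) :=
  h.map (AddMonoidHom.mk' (fun A : Matrix α β ℝ => v ᵥ* A) fun A B => Matrix.vecMul_add A B v)
    (continuous_const.matrix_vecMul continuous_id)

private lemma hasSum_mulVec {f : ι → Matrix α β ℝ} {M : Matrix α β ℝ} (h : HasSum f M)
    (c : β → ℝ) : HasSum (fun k => f k *ᵥ c) (M *ᵥ c) :=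
  h.map (AddMonoidHom.mk' (fun A : Matrix α β ℝ => A *ᵥ c) fun A B => Matrix.add_mulVec A B c)
    (continuous_id.matrix_mulVec continuous_const)

private lemma hasSum_dotProduct {f : ι → Matrix α β ℝ} {M : Matrix α β ℝ} (h : HasSum f M)
    (v : α → ℝ) (c : β → ℝ) :
    HasSum (fun k => v ⬝ᵥ (f k *ᵥ c)) (v ⬝ᵥ (M *ᵥ c)) :=
  (hasSum_mulVec h c).map
    (AddMonoidHom.mk' (fun w : α → ℝ => v ⬝ᵥ w) fun w w' => dotProduct_add v w w')
    (continuous_const.dotProduct continuous_id)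

end SumHelpers

section OmHelpers

variable {n : ℕ}

private lemma Om_transpose : (Om n)ᵀ = -Om n := by
  ext (i | i) (j | j) <;>
    simp [Om, Matrix.fromBlocks, Matrix.transpose_apply, Matrix.one_apply, eq_comm]

private lemma Om_mul_Om : Om n * Om n = -1 := by
  simp only [Om, Matrix.fromBlocks_multiply]
  ext (i | i) (j | j) <;>
    simp [Matrix.fromBlocks, Matrix.one_apply]

private lemma Om_inv : (Om n)⁻¹ = -Om n :=
  Matrix.inv_eq_right_inv (by rw [mul_neg, Om_mul_Om, neg_neg])

private lemma Om_isUnit : IsUnit (Om n) :=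
  ⟨⟨Om n, -Om n, by rw [mul_neg, Om_mul_Om, neg_neg], by rw [neg_mul, Om_mul_Om, neg_neg]⟩, rfl⟩

private lemma hOO (Z : Matrix (Fin n ⊕ Fin n) (Fin n ⊕ Fin n) ℝ) :
    Om n * (Om n * Z) = -Z := by
  rw [← mul_assoc, Om_mul_Om, neg_one_mul]

section XX
variable (X : Matrix (Fin n ⊕ Fin n) (Fin n ⊕ Fin n) ℝ)

private lemma XT_eq (hsym : (Om n * X).IsSymm) : Xᵀ = Om n * X * Om n := by
  have h1 : Xᵀ * (Om n)ᵀ = Om n * X := by rw [← Matrix.transpose_mul]; exact hsym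
  rw [Om_transpose, mul_neg] at h1
  have h2 : Xᵀ * Om n = -(Om n * X) := by rw [← h1, neg_neg]
  calc Xᵀ = -(Xᵀ * (Om n * Om n)) := by rw [Om_mul_Om, mul_neg_one, neg_neg]
  _ = -(Xᵀ * Om n * Om n) := by rw [mul_assoc]
  _ = Om n * X * Om n := by rw [h2, neg_mul, neg_neg]

private lemma XinvT_eq (hX : IsUnit X.det) (hsym : (Om n * X).IsSymm) :
    (X⁻¹)ᵀ = Om n * X⁻¹ * Om n := by
  rw [Matrix.transpose_nonsing_inv, XT_eq X hsym]
  apply Matrix.inv_eq_right_inv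
  have hx : X * (X⁻¹ * Om n) = Om n := by
    rw [← mul_assoc, Matrix.mul_nonsing_inv _ hX, one_mul]
  simp only [mul_assoc, hOO, mul_neg, neg_mul, neg_neg, hx]
  rw [Om_mul_Om, neg_neg]

private lemma expT_eq (hX : IsUnit X.det) (hsym : (Om n * X).IsSymm) :
    (exp X)ᵀ = -(Om n * exp (-X) * Om n) := by
  rw [← Matrix.exp_transpose, XT_eq X hsym]
  have h : Om n * X * Om n = Om n * (-X) * (Om n)⁻¹ := by
    rw [Om_inv]; simp [mul_neg, neg_mul]
  rw [h, Matrix.exp_conj (Om n) (-X) Om_isUnit, Om_inv, mul_neg]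

private lemma expnT_eq (hX : IsUnit X.det) (hsym : (Om n * X).IsSymm) :
    (exp (-X))ᵀ = -(Om n * exp X * Om n) := by
  have hsym' : (Om n * (-X)).IsSymm := by
    show (Om n * (-X))ᵀ = Om n * (-X)
    rw [mul_neg, Matrix.transpose_neg, show (Om n * X)ᵀ = Om n * X from hsym]
  have hXn : IsUnit (-X).det := by
    rw [Matrix.det_neg]; exact (isUnit_one.neg.pow _).mul hX
  have h := expT_eq (-X) hXn hsym'
  rw [neg_neg] at h; exact h

private lemma claimA (hX : IsUnit X.det) (hsym : (Om n * X).IsSymm) :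
    Om n * ((exp X - 1) * X⁻¹) = ((1 - exp (-X)) * X⁻¹)ᵀ * Om n := by
  have hE : X⁻¹ * exp X = exp X * X⁻¹ := (commute_inv hX (commute_X_expX X)).eq
  rw [Matrix.transpose_mul, XinvT_eq X hX hsym, Matrix.transpose_sub, Matrix.transpose_one,
    expnT_eq X hX hsym]
  simp only [sub_neg_eq_add, Matrix.mul_sub, Matrix.sub_mul, Matrix.mul_add, Matrix.add_mul,
    mul_one, one_mul, mul_assoc, hOO, Om_mul_Om, mul_neg, neg_mul, neg_neg, mul_neg_one,
    neg_one_mul]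
  rw [hE]; abel

private lemma claimD (hX : IsUnit X.det) (hsym : (Om n * X).IsSymm) :
    (Om n * ((1/2 : ℝ) • (exp X + exp (-X)) - 1) * (X⁻¹ * X⁻¹))ᵀ
      = -(Om n * ((1/2 : ℝ) • (exp X + exp (-X)) - 1) * (X⁻¹ * X⁻¹)) := by
  have hE : Commute X⁻¹ (exp X) := commute_inv hX (commute_X_expX X)
  have hE' : Commute X⁻¹ (exp (-X)) := commute_inv hX (commute_X_expnX X)
  have hE1 : ∀ Z : Matrix (Fin n ⊕ Fin n) (Fin n ⊕ Fin n) ℝ,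
      exp X * (X⁻¹ * Z) = X⁻¹ * (exp X * Z) := by
    intro Z; rw [← mul_assoc, ← hE.eq, mul_assoc]
  have hE1' : ∀ Z : Matrix (Fin n ⊕ Fin n) (Fin n ⊕ Fin n) ℝ,
      exp (-X) * (X⁻¹ * Z) = X⁻¹ * (exp (-X) * Z) := by
    intro Z; rw [← mul_assoc, ← hE'.eq, mul_assoc]
  rw [Matrix.transpose_mul, Matrix.transpose_mul, Matrix.transpose_mul,
    XinvT_eq X hX hsym, Matrix.transpose_sub, Matrix.transpose_smul, Matrix.transpose_add,
    expT_eq X hX hsym, expnT_eq X hX hsym, Matrix.transpose_one, Om_transpose]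
  simp only [smul_neg, Matrix.mul_sub, Matrix.sub_mul, Matrix.mul_add, Matrix.add_mul,
    mul_one, one_mul, mul_assoc, hOO, Om_mul_Om, mul_neg, neg_mul, neg_neg, mul_neg_one,
    neg_one_mul, smul_mul_assoc, mul_smul_comm, neg_add, neg_sub, smul_add, smul_sub,
    hE1, hE1', ← hE.eq, ← hE'.eq]
  abel

private lemma skew_dot {D : Matrix (Fin n ⊕ Fin n) (Fin n ⊕ Fin n) ℝ} (hD : Dᵀ = -D)
    (s : Fin n ⊕ Fin n → ℝ) : s ⬝ᵥ (D *ᵥ s) = 0 := by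
  have h1 : s ⬝ᵥ (D *ᵥ s) = (s ᵥ* D) ⬝ᵥ s := Matrix.dotProduct_mulVec s D s
  have h2 : s ᵥ* D = Dᵀ *ᵥ s := (Matrix.mulVec_transpose D s).symm
  have h3 : s ⬝ᵥ (D *ᵥ s) = -(s ⬝ᵥ (D *ᵥ s)) := by
    conv_lhs => rw [h1, h2, hD, Matrix.neg_mulVec]
    rw [neg_dotProduct, dotProduct_comm]
  linarith

private lemma claimCorner (hX : IsUnit X.det) (hsym : (Om n * X).IsSymm)
    (s : Fin n ⊕ Fin n → ℝ) :
    (Om n *ᵥ s) ⬝ᵥ (((exp X - 1 - X) * (X⁻¹ * X⁻¹)) *ᵥ s)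
      = s ⬝ᵥ ((Om n * (X - (1/2 : ℝ) • (exp X - exp (-X))) * (X⁻¹ * X⁻¹)) *ᵥ s) := by
  have h0 : Om n *ᵥ s = s ᵥ* (Om n)ᵀ := by
    rw [← Matrix.mulVec_transpose, Matrix.transpose_transpose]
  rw [h0, ← Matrix.dotProduct_mulVec, Matrix.mulVec_mulVec]
  have h1 : -(exp X - 1 - X)
      = X - (1/2:ℝ) • (exp X - exp (-X)) - ((1/2:ℝ) • (exp X + exp (-X)) - 1) := by
    module
  have key : (Om n)ᵀ * ((exp X - 1 - X) * (X⁻¹ * X⁻¹))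
      = Om n * (X - (1/2 : ℝ) • (exp X - exp (-X))) * (X⁻¹ * X⁻¹)
        - Om n * ((1/2 : ℝ) • (exp X + exp (-X)) - 1) * (X⁻¹ * X⁻¹) := by
    rw [Om_transpose]
    calc -Om n * ((exp X - 1 - X) * (X⁻¹ * X⁻¹))
        = Om n * -(exp X - 1 - X) * (X⁻¹ * X⁻¹) := by
          simp only [mul_neg, neg_mul, mul_assoc]
    _ = _ := by rw [h1, Matrix.mul_sub, Matrix.sub_mul]
  rw [key, Matrix.sub_mulVec, dotProduct_sub, skew_dot (claimD X hX hsym), sub_zero]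

private lemma rowvec_id (hX : IsUnit X.det) (hsym : (Om n * X).IsSymm)
    (s : Fin n ⊕ Fin n → ℝ) :
    (Om n *ᵥ s) ᵥ* ((exp X - 1) * X⁻¹)
      = Om n *ᵥ (((1 - exp (-X)) * X⁻¹) *ᵥ s) := by
  have h0 : Om n *ᵥ s = s ᵥ* (Om n)ᵀ := by
    rw [← Matrix.mulVec_transpose, Matrix.transpose_transpose]
  rw [h0, Matrix.vecMul_vecMul, Matrix.mulVec_mulVec, ← Matrix.vecMul_transpose, Om_transpose]
  congr 1
  rw [Matrix.transpose_mul, Om_transpose, neg_mul, mul_neg, claimA X hX hsym]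

end XX
end OmHelpers

section BlkHelpers

def blkP {n : ℕ} (W : Matrix (Fin n ⊕ Fin n) (Fin n ⊕ Fin n) ℝ)
    (r c : Fin n ⊕ Fin n → ℝ) (b : ℝ) :
    Matrix (Unit ⊕ ((Fin n ⊕ Fin n) ⊕ Unit)) (Unit ⊕ ((Fin n ⊕ Fin n) ⊕ Unit)) ℝ :=
  Matrix.of fun i j =>
    match i, j with
    | Sum.inl _, Sum.inr (Sum.inl l) => r l
    | Sum.inl _, Sum.inr (Sum.inr _) => b
    | Sum.inr (Sum.inl k), Sum.inr (Sum.inl l) => W k l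
    | Sum.inr (Sum.inl k), Sum.inr (Sum.inr _) => c k
    | _, _ => 0

variable {n : ℕ}

private lemma blk_eq_blkP (X : Matrix (Fin n ⊕ Fin n) (Fin n ⊕ Fin n) ℝ)
    (s : Fin n ⊕ Fin n → ℝ) (a : ℝ) : blk X s a = blkP X (Om n *ᵥ s) s a := rfl

private lemma blk_mul_blkP (X W : Matrix (Fin n ⊕ Fin n) (Fin n ⊕ Fin n) ℝ)
    (s r c : Fin n ⊕ Fin n → ℝ) (a b : ℝ) :
    blk X s a * blkP W r c b
      = blkP (X * W) ((Om n *ᵥ s) ᵥ* W) (X *ᵥ c) ((Om n *ᵥ s) ⬝ᵥ c) := by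
  ext (i | k | i) (j | l | j) <;>
    simp [blk, blkP, Matrix.mul_apply, Fintype.sum_sum_type, Matrix.vecMul, Matrix.mulVec,
      dotProduct]

private lemma blk_pow (X : Matrix (Fin n ⊕ Fin n) (Fin n ⊕ Fin n) ℝ) (s : Fin n ⊕ Fin n → ℝ)
    (a : ℝ) (k : ℕ) :
    (blk X s a) ^ (k+2)
      = blkP (X ^ (k+2)) ((Om n *ᵥ s) ᵥ* X ^ (k+1)) (X ^ (k+1) *ᵥ s)
          ((Om n *ᵥ s) ⬝ᵥ (X ^ k *ᵥ s)) := by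
  induction k with
  | zero =>
    rw [pow_two]
    nth_rewrite 2 [blk_eq_blkP X s a]
    rw [blk_mul_blkP]
    simp [pow_two, pow_one, Matrix.one_mulVec]
  | succ k ih =>
    have h : k + 1 + 2 = (k + 2) + 1 := rfl
    rw [h, pow_succ']
    rw [ih, blk_mul_blkP]
    rw [← pow_succ', Matrix.mulVec_mulVec, ← pow_succ']

end BlkHelpers

/-- For invertible `X` with `ΩX` symmetric, `s ∈ ℝ^{2n}`, `a ∈ ℝ`, the matrix exponential of
`[[0, sᵀΩᵀ, a], [0, X, s], [0, 0, 0]]` equals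
`[[1, ((I - e^{-X})X⁻¹s)ᵀΩᵀ, a + sᵀΩ(X - sinh X)X⁻²s], [0, e^X, (e^X - I)X⁻¹s], [0, 0, 1]]`,
where `sinh X = (e^X - e^{-X})/2`. -/
theorem exp_blk (n : ℕ)
    (X : Matrix (Fin n ⊕ Fin n) (Fin n ⊕ Fin n) ℝ)
    (s : Fin n ⊕ Fin n → ℝ) (a : ℝ)
    (hX : IsUnit X.det) (hsym : (Om n * X).IsSymm) :
    NormedSpace.exp (blk X s a)
      = blkU (NormedSpace.exp X)
          (((1 - NormedSpace.exp (-X)) * X⁻¹) *ᵥ s)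
          (((NormedSpace.exp X - 1) * X⁻¹) *ᵥ s)
          (a + s ⬝ᵥ ((Om n
              * (X - (1 / 2 : ℝ) • (NormedSpace.exp X - NormedSpace.exp (-X)))
              * (X⁻¹ * X⁻¹)) *ᵥ s)) := by
  have hsumT : Summable (fun k : ℕ => ((Nat.factorial (k+2) : ℝ))⁻¹ •
      blkP (X ^ (k+2)) ((Om n *ᵥ s) ᵥ* X ^ (k+1)) (X ^ (k+1) *ᵥ s)
        ((Om n *ᵥ s) ⬝ᵥ (X ^ k *ᵥ s))) := by
    have h := (summable_nat_add_iff 2).mpr (summable_exp_series (blk X s a))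
    refine h.congr fun k => ?_
    rw [blk_pow]
  have hsF : HasSum (fun k : ℕ => ((Nat.factorial (k+1) : ℝ))⁻¹ • X ^ k)
      ((exp X - 1) * X⁻¹) := F_eq X hX ▸ (summable1 X).hasSum
  have hsR : HasSum (fun k : ℕ => ((Nat.factorial (k+2) : ℝ))⁻¹ • X ^ (k+1))
      ((exp X - 1) * X⁻¹ - 1) := by
    have hsummR : Summable (fun k : ℕ => ((Nat.factorial (k+2) : ℝ))⁻¹ • X ^ (k+1)) :=
      ((summable_nat_add_iff 1).mpr (summable1 X)).congr fun k => rfl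
    have hval := R_eq X
    rw [F_eq X hX] at hval
    exact hval ▸ hsummR.hasSum
  have hsG : HasSum (fun k : ℕ => ((Nat.factorial (k+2) : ℝ))⁻¹ • X ^ k)
      ((exp X - 1 - X) * (X⁻¹ * X⁻¹)) := G_eq X hX ▸ (summable2 X).hasSum
  rw [exp_peel2 (blk X s a)]
  have hpow : ∀ k : ℕ, ((Nat.factorial (k+2) : ℝ))⁻¹ • (blk X s a) ^ (k+2)
      = ((Nat.factorial (k+2) : ℝ))⁻¹ •
          blkP (X ^ (k+2)) ((Om n *ᵥ s) ᵥ* X ^ (k+1)) (X ^ (k+1) *ᵥ s)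
            ((Om n *ᵥ s) ⬝ᵥ (X ^ k *ᵥ s)) := fun k => by rw [blk_pow]
  rw [tsum_congr hpow]
  ext i j
  have SIMP : True := trivial
  rcases i with i | i
  · rcases j with j | j
    · -- (inl, inl)
      simp only [Matrix.add_apply, tsum_entry hsumT]
      simp [blk, blkU, blkP, Matrix.one_apply]
    · rcases j with l | j
      · -- (inl, inr inl l) : top row vector
        simp only [Matrix.add_apply, tsum_entry hsumT]
        simp only [Matrix.smul_apply, smul_eq_mul, blk, blkU, blkP, Matrix.of_apply,
          Matrix.one_apply, reduceCtorEq, if_false, zero_add]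
        have hrow : HasSum (fun k' : ℕ =>
            ((Nat.factorial (k'+2) : ℝ))⁻¹ * ((Om n *ᵥ s) ᵥ* X ^ (k'+1)) l)
            (((Om n *ᵥ s) ᵥ* ((exp X - 1) * X⁻¹ - 1)) l) := by
          have h := hasSum_vecMul hsR (Om n *ᵥ s)
          have h2 := Pi.hasSum.mp h l
          simpa [vecMul_smul_matrix, Pi.smul_apply, smul_eq_mul] using h2
        rw [hrow.tsum_eq, Matrix.vecMul_sub, Matrix.vecMul_one, rowvec_id X hX hsym s]
        simp [Pi.sub_apply, Matrix.mulVec_mulVec]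
      · -- (inl, inr inr) : corner
        simp only [Matrix.add_apply, tsum_entry hsumT]
        simp only [Matrix.smul_apply, smul_eq_mul, blk, blkU, blkP, Matrix.of_apply,
          Matrix.one_apply, reduceCtorEq, if_false, zero_add]
        have hc : HasSum (fun k' : ℕ =>
            ((Nat.factorial (k'+2) : ℝ))⁻¹ * ((Om n *ᵥ s) ⬝ᵥ (X ^ k' *ᵥ s)))
            ((Om n *ᵥ s) ⬝ᵥ (((exp X - 1 - X) * (X⁻¹ * X⁻¹)) *ᵥ s)) := by
          have h := hasSum_dotProduct hsG (Om n *ᵥ s) s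
          simpa [Matrix.smul_mulVec, dotProduct_smul, smul_eq_mul] using h
        rw [hc.tsum_eq, claimCorner X hX hsym s]
  · rcases i with k | i
    · rcases j with j | j
      · -- (inr inl k, inl)
        simp only [Matrix.add_apply, tsum_entry hsumT]
        simp [blk, blkU, blkP, Matrix.one_apply]
      · rcases j with l | j
        · -- (inr inl k, inr inl l) : middle block
          simp only [Matrix.add_apply, tsum_entry hsumT]
          simp only [Matrix.smul_apply, smul_eq_mul, blk, blkU, blkP, Matrix.of_apply,
            Matrix.one_apply, reduceCtorEq, if_false, Sum.inr.injEq, Sum.inl.injEq]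
          have hmid : HasSum (fun k' : ℕ =>
              ((Nat.factorial (k'+2) : ℝ))⁻¹ * (X ^ (k'+2)) k l)
              ((exp X - 1 - X) k l) := by
            have hXs : Summable (fun k' : ℕ => ((Nat.factorial (k'+2) : ℝ))⁻¹ • X ^ (k'+2)) :=
              ((summable_nat_add_iff 2).mpr (summable_exp_series X)).congr fun k' => rfl
            have heq : (∑' k' : ℕ, ((Nat.factorial (k'+2) : ℝ))⁻¹ • X ^ (k'+2))
                = exp X - 1 - X := by
              rw [exp_peel2 X]; abel
            have h := hasSum_entry (heq ▸ hXs.hasSum) k l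
            simpa [Matrix.smul_apply, smul_eq_mul] using h
          rw [hmid.tsum_eq]
          simp only [Matrix.sub_apply, Matrix.one_apply]
          ring
        · -- (inr inl k, inr inr) : right column
          simp only [Matrix.add_apply, tsum_entry hsumT]
          simp only [Matrix.smul_apply, smul_eq_mul, blk, blkU, blkP, Matrix.of_apply,
            Matrix.one_apply, reduceCtorEq, if_false, zero_add]
          have hcol : HasSum (fun k' : ℕ =>
              ((Nat.factorial (k'+2) : ℝ))⁻¹ * ((X ^ (k'+1) *ᵥ s) k))
              ((((exp X - 1) * X⁻¹ - 1) *ᵥ s) k) := by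
            have h := hasSum_mulVec hsR s
            have h2 := Pi.hasSum.mp h k
            simpa [Matrix.smul_mulVec, Pi.smul_apply, smul_eq_mul] using h2
          rw [hcol.tsum_eq, Matrix.sub_mulVec, Matrix.one_mulVec]
          simp [Pi.sub_apply]
    · rcases j with j | j
      · -- (inr inr, inl)
        simp only [Matrix.add_apply, tsum_entry hsumT]
        simp [blk, blkU, blkP, Matrix.one_apply]
      · rcases j with l | j
        · -- (inr inr, inr inl)
          simp only [Matrix.add_apply, tsum_entry hsumT]
          simp [blk, blkU, blkP, Matrix.one_apply]
        · -- (inr inr, inr inr)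
          simp only [Matrix.add_apply, tsum_entry hsumT]
          simp [blk, blkU, blkP, Matrix.one_apply]
end
end
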